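/- Let g : ℝ → ℂ be a Schwartz function and for ε ≥ 0 define S(ε) = ∑_{n ≥ 1} (4 + ε)^{−n} ∑_{k ∈ ℤ} cos(2π(4ⁿ − 1)·(k/(2·4ⁿ))) · g(k/(2·4ⁿ)). Then all the double series converge absolutely for ε > 0, the double series at ε = 0 converges (iterated, inner sum first), and S(ε) → S(0) as ε → 0⁺. -/

import Mathlib

open scoped Real

/-- The `n`-th inner term: `cos(2π(4ⁿ-1)·(k/(2·4ⁿ))) · g(k/(2·4ⁿ))`. -/
noncomputable def innerTerm (g : SchwartzMap ℝ ℂ) (n : ℕ) (k : ℤ) : ℂ :=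
  (Real.cos (2 * Real.pi * (4 ^ n - 1) * ((k : ℝ) / (2 * 4 ^ n))) : ℂ) *
    g ((k : ℝ) / (2 * 4 ^ n))

/-- The regularised series `S(ε)`, summing over layers `n ≥ 1`. -/
noncomputable def S (g : SchwartzMap ℝ ℂ) (ε : ℝ) : ℂ :=
  ∑' n : ℕ, (((4 + ε) ^ (-((n : ℤ) + 1)) : ℝ) : ℂ) * ∑' k : ℤ, innerTerm g (n + 1) k

namespace RegAux

open Filter

/-! ## Elementary sum estimates -/

lemma partial_sum_le (N : ℕ) (hN : 1 ≤ N) (m : ℕ) :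
    ∑ i ∈ Finset.range m, (((N : ℝ) + 1 + i) ^ 2)⁻¹ ≤ 1 / (N:ℝ) - 1 / ((N : ℝ) + m) := by
  have hN1 : (1 : ℝ) ≤ N := by exact_mod_cast hN
  induction m with
  | zero => simp
  | succ m ih =>
    rw [Finset.sum_range_succ]
    have hx : (1 : ℝ) ≤ (N : ℝ) + m := by
      have : (0:ℝ) ≤ m := Nat.cast_nonneg m
      linarith
    have key : (((N : ℝ) + 1 + m) ^ 2)⁻¹ ≤ 1 / ((N : ℝ) + m) - 1 / ((N : ℝ) + m + 1) := by
      rw [div_sub_div _ _ (by linarith) (by linarith), inv_eq_one_div,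
        div_le_div_iff₀ (by nlinarith) (by nlinarith)]
      nlinarith
    have hc : ((m + 1 : ℕ) : ℝ) = (m : ℝ) + 1 := by push_cast; ring
    rw [hc, show (N : ℝ) + ((m : ℝ) + 1) = (N : ℝ) + m + 1 by ring]
    linarith

lemma tail_bound (N : ℕ) (hN : 1 ≤ N) :
    Summable (fun n : ℕ => (((N : ℝ) + 1 + n) ^ 2)⁻¹) ∧
      ∑' n : ℕ, (((N : ℝ) + 1 + n) ^ 2)⁻¹ ≤ 1 / (N:ℝ) := by
  have hN1 : (1 : ℝ) ≤ N := by exact_mod_cast hN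
  have base : Summable (fun n : ℕ => ((n : ℝ) ^ 2)⁻¹) := by
    simpa [one_div] using Real.summable_one_div_nat_pow.mpr (by norm_num : 1 < 2)
  have hs : Summable (fun n : ℕ => (((N : ℝ) + 1 + n) ^ 2)⁻¹) := by
    refine ((summable_nat_add_iff (N + 1)).mpr base).congr fun n => ?_
    push_cast; ring_nf
  refine ⟨hs, Summable.tsum_le_of_sum_range_le hs fun m => ?_⟩
  have h1 := partial_sum_le N hN m
  have h2 : (0:ℝ) < (N:ℝ) + m := by
    have : (0:ℝ) ≤ m := Nat.cast_nonneg m; linarith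
  have h3 : 0 ≤ 1 / ((N : ℝ) + m) := by positivity
  linarith

lemma full_bound (N : ℕ) (hN : 1 ≤ N) :
    Summable (fun n : ℕ => (((N : ℝ) + n) ^ 2)⁻¹) ∧
      ∑' n : ℕ, (((N : ℝ) + n) ^ 2)⁻¹ ≤ 2 / (N:ℝ) := by
  have hN1 : (1 : ℝ) ≤ N := by exact_mod_cast hN
  have hNpos : (0 : ℝ) < N := by linarith
  have base : Summable (fun n : ℕ => ((n : ℝ) ^ 2)⁻¹) := by
    simpa [one_div] using Real.summable_one_div_nat_pow.mpr (by norm_num : 1 < 2)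
  have full : Summable (fun n : ℕ => (((N : ℝ) + n) ^ 2)⁻¹) := by
    refine ((summable_nat_add_iff N).mpr base).congr fun n => ?_
    push_cast; ring_nf
  refine ⟨full, ?_⟩
  rw [Summable.tsum_eq_zero_add full]
  have h0 : (((N : ℝ) + (0 : ℕ)) ^ 2)⁻¹ ≤ 1 / (N:ℝ) := by
    push_cast
    rw [add_zero, one_div]
    exact inv_anti₀ hNpos (by nlinarith)
  have htail : ∑' n : ℕ, (((N : ℝ) + ((n : ℕ) + 1 : ℕ)) ^ 2)⁻¹ ≤ 1 / (N:ℝ) := by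
    have he : (fun n : ℕ => (((N : ℝ) + ((n : ℕ) + 1 : ℕ)) ^ 2)⁻¹)
        = fun n : ℕ => (((N : ℝ) + 1 + n) ^ 2)⁻¹ := by
      funext n; push_cast; ring_nf
    rw [he]
    exact (tail_bound N hN).2
  have h2 : (2:ℝ)/(N:ℝ) = 1/N + 1/N := by ring
  rw [h2]
  exact add_le_add h0 htail

lemma qsum (N : ℕ) (hN : 1 ≤ N) :
    Summable (fun k : ℤ => ((N : ℝ) ^ 2 + (k : ℝ) ^ 2)⁻¹) ∧
      ∑' k : ℤ, ((N : ℝ) ^ 2 + (k : ℝ) ^ 2)⁻¹ ≤ 8 / (N:ℝ) := by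
  have hN1 : (1 : ℝ) ≤ N := by exact_mod_cast hN
  have hNpos : (0 : ℝ) < N := by linarith
  obtain ⟨fulls, fullb⟩ := full_bound N hN
  obtain ⟨tails, tailb⟩ := tail_bound N hN
  set q : ℤ → ℝ := fun k => ((N : ℝ) ^ 2 + (k : ℝ) ^ 2)⁻¹ with hq
  have hposle : ∀ n : ℕ, q (n : ℤ) ≤ 2 * (((N : ℝ) + n) ^ 2)⁻¹ := by
    intro n
    have hn : (0:ℝ) ≤ n := Nat.cast_nonneg n
    simp only [hq, Int.cast_natCast]
    rw [inv_eq_one_div, ← div_eq_mul_inv, div_le_div_iff₀ (by positivity) (by positivity)]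
    nlinarith [sq_nonneg ((N:ℝ) - n)]
  have hnegle : ∀ n : ℕ, q (-((n : ℤ) + 1)) ≤ 2 * (((N : ℝ) + 1 + n) ^ 2)⁻¹ := by
    intro n
    have hn : (0:ℝ) ≤ n := Nat.cast_nonneg n
    simp only [hq]
    rw [show ((-((n : ℤ) + 1) : ℤ) : ℝ) = -((n:ℝ)+1) by push_cast; ring]
    rw [inv_eq_one_div, ← div_eq_mul_inv, div_le_div_iff₀ (by positivity) (by positivity)]
    nlinarith [sq_nonneg ((N:ℝ) - ((n:ℝ) + 1))]
  have sp : Summable (fun n : ℕ => q (n : ℤ)) :=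
    Summable.of_nonneg_of_le (fun n => by positivity) hposle (fulls.mul_left 2)
  have sn : Summable (fun n : ℕ => q (-((n : ℤ) + 1))) :=
    Summable.of_nonneg_of_le (fun n => by positivity) hnegle (tails.mul_left 2)
  refine ⟨Summable.of_nat_of_neg_add_one sp sn, ?_⟩
  rw [tsum_of_nat_of_neg_add_one sp sn]
  have bp : ∑' n : ℕ, q (n : ℤ) ≤ 4 / (N:ℝ) := by
    calc ∑' n : ℕ, q (n : ℤ) ≤ ∑' n : ℕ, 2 * (((N : ℝ) + n) ^ 2)⁻¹ :=
          Summable.tsum_le_tsum hposle sp (fulls.mul_left 2)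
      _ = 2 * ∑' n : ℕ, (((N : ℝ) + n) ^ 2)⁻¹ := tsum_mul_left
      _ ≤ 2 * (2 / N) := by linarith
      _ = 4 / N := by ring
  have bn : ∑' n : ℕ, q (-((n : ℤ) + 1)) ≤ 2 / (N:ℝ) := by
    calc ∑' n : ℕ, q (-((n : ℤ) + 1)) ≤ ∑' n : ℕ, 2 * (((N : ℝ) + 1 + n) ^ 2)⁻¹ :=
          Summable.tsum_le_tsum hnegle sn (tails.mul_left 2)
      _ = 2 * ∑' n : ℕ, (((N : ℝ) + 1 + n) ^ 2)⁻¹ := tsum_mul_left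
      _ ≤ 2 * (1 / N) := by linarith
      _ = 2 / N := by ring
  have : (8:ℝ)/(N:ℝ) = 4/N + 2/N + 2/N := by ring
  rw [this]
  have h0 : (0:ℝ) ≤ 2 / (N:ℝ) := by positivity
  linarith

/-! ## Second difference estimate via the mean value inequality -/

lemma second_diff (h h1 h2 : ℝ → ℂ)
    (hd1 : ∀ x, HasDerivAt h (h1 x) x) (hd2 : ∀ x, HasDerivAt h1 (h2 x) x)
    {a δ M : ℝ} (hδ : 0 ≤ δ)
    (hM : ∀ t ∈ Set.Icc a (a + 2 * δ), ‖h2 t‖ ≤ M) :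
    ‖h a - 2 * h (a + δ) + h (a + 2 * δ)‖ ≤ M * δ ^ 2 := by
  have hshift : ∀ t : ℝ, HasDerivAt (fun u => h (u + δ)) (h1 (t + δ)) t := by
    intro t
    exact HasDerivAt.comp_add_const t δ (hd1 (t + δ))
  set φ : ℝ → ℂ := fun t => h t - h (t + δ) with hφ
  have hdφ : ∀ t : ℝ, HasDerivAt φ (h1 t - h1 (t + δ)) t := fun t => (hd1 t).sub (hshift t)
  -- inner bound
  have hφ'bound : ∀ t ∈ Set.Icc a (a + δ), ‖h1 t - h1 (t + δ)‖ ≤ M * δ := by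
    intro t ht
    have hmem : ∀ u ∈ Set.Icc t (t + δ), u ∈ Set.Icc a (a + 2 * δ) := by
      intro u hu
      constructor
      · linarith [ht.1, hu.1]
      · linarith [ht.2, hu.2]
    have := Convex.norm_image_sub_le_of_norm_hasDerivWithin_le
      (f := h1) (f' := h2) (s := Set.Icc t (t + δ))
      (fun u _ => (hd2 u).hasDerivWithinAt)
      (fun u hu => hM u (hmem u hu)) (convex_Icc _ _)
      (Set.left_mem_Icc.mpr (by linarith)) (Set.right_mem_Icc.mpr (by linarith))
    rw [norm_sub_rev]
    calc ‖h1 (t + δ) - h1 t‖ ≤ M * ‖t + δ - t‖ := this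
      _ = M * δ := by rw [show t + δ - t = δ by ring, Real.norm_eq_abs, abs_of_nonneg hδ]
  have houter := Convex.norm_image_sub_le_of_norm_hasDerivWithin_le
    (f := φ) (f' := fun t => h1 t - h1 (t + δ)) (s := Set.Icc a (a + δ))
    (fun u _ => (hdφ u).hasDerivWithinAt) hφ'bound (convex_Icc _ _)
    (Set.left_mem_Icc.mpr (by linarith)) (Set.right_mem_Icc.mpr (by linarith))
  have heq : φ (a + δ) - φ a = -(h a - 2 * h (a + δ) + h (a + 2 * δ)) := by
    simp only [hφ]
    rw [show a + δ + δ = a + 2 * δ by ring]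
    ring
  calc ‖h a - 2 * h (a + δ) + h (a + 2 * δ)‖
      = ‖φ (a + δ) - φ a‖ := by rw [heq, norm_neg]
    _ ≤ M * δ * ‖a + δ - a‖ := houter
    _ = M * δ ^ 2 := by
        rw [show a + δ - a = δ by ring, Real.norm_eq_abs, abs_of_nonneg hδ]; ring

/-- Pointwise comparison of `1/(1+t²)` on the interval `[k/N, (k+2)/N]`. -/
lemma frac_bound (N : ℕ) (hN : 1 ≤ N) (k : ℤ) (t : ℝ)
    (ht : t ∈ Set.Icc ((k : ℝ) / N) (((k : ℝ) + 2) / N)) :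
    (1 + t ^ 2)⁻¹ ≤ (N : ℝ) ^ 2 * ((N : ℝ) ^ 2 + (k : ℝ) ^ 2)⁻¹
      + (N : ℝ) ^ 2 * ((N : ℝ) ^ 2 + ((k : ℝ) + 2) ^ 2)⁻¹ := by
  have hN1 : (1 : ℝ) ≤ N := by exact_mod_cast hN
  have hNpos : (0 : ℝ) < N := by linarith
  have h1t : (0:ℝ) < 1 + t ^ 2 := by positivity
  have case1 : (0:ℤ) ≤ k → (1 + t ^ 2)⁻¹ ≤ (N : ℝ) ^ 2 * ((N : ℝ) ^ 2 + (k : ℝ) ^ 2)⁻¹ := by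
    intro hk
    have hkr : (0:ℝ) ≤ (k:ℝ) := by exact_mod_cast hk
    have hkt : (k : ℝ) / N ≤ t := ht.1
    have hk' : (k : ℝ) ≤ N * t := by
      rw [div_le_iff₀ hNpos] at hkt; linarith [hkt]
    rw [inv_eq_one_div, ← div_eq_mul_inv, div_le_div_iff₀ h1t (by positivity)]
    nlinarith
  have case2 : (k : ℝ) + 2 ≤ 0 →
      (1 + t ^ 2)⁻¹ ≤ (N : ℝ) ^ 2 * ((N : ℝ) ^ 2 + ((k : ℝ) + 2) ^ 2)⁻¹ := by
    intro hk
    have hkt : t ≤ ((k : ℝ) + 2) / N := ht.2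
    have hk' : N * t ≤ (k : ℝ) + 2 := by
      rw [le_div_iff₀ hNpos] at hkt; linarith [hkt]
    rw [inv_eq_one_div, ← div_eq_mul_inv, div_le_div_iff₀ h1t (by positivity)]
    nlinarith
  have hA : (0:ℝ) ≤ (N : ℝ) ^ 2 * ((N : ℝ) ^ 2 + (k : ℝ) ^ 2)⁻¹ := by positivity
  have hB : (0:ℝ) ≤ (N : ℝ) ^ 2 * ((N : ℝ) ^ 2 + ((k : ℝ) + 2) ^ 2)⁻¹ := by positivity
  rcases le_or_gt 0 k with hk | hk
  · linarith [case1 hk]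
  · rcases le_or_gt (k + 2) 0 with hk2 | hk2
    · have : (k : ℝ) + 2 ≤ 0 := by exact_mod_cast hk2
      linarith [case2 this]
    · -- k = -1
      have hkm1 : k = -1 := by omega
      subst hkm1
      have h1 : (1 + t ^ 2)⁻¹ ≤ 1 := by
        rw [inv_le_one_iff₀]; right; nlinarith
      have hval : ((-1 : ℤ) : ℝ) = -1 := by norm_num
      rw [hval]
      have he1 : ((-1:ℝ)) ^ 2 = 1 := by norm_num
      have he2 : ((-1:ℝ) + 2) ^ 2 = 1 := by norm_num
      rw [he1, he2]
      have hpos : (0:ℝ) < (N:ℝ)^2 + 1 := by positivity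
      have : (1:ℝ) ≤ (N : ℝ) ^ 2 * ((N : ℝ) ^ 2 + 1)⁻¹ + (N : ℝ) ^ 2 * ((N : ℝ) ^ 2 + 1)⁻¹ := by
        rw [← div_eq_mul_inv, ← add_div, le_div_iff₀ hpos]
        nlinarith
      linarith

/-! ## The function `x ↦ cos(2πx)·g(x)` and its derivatives -/

noncomputable def Dg (g : SchwartzMap ℝ ℂ) : SchwartzMap ℝ ℂ := SchwartzMap.derivCLM ℝ ℂ g

noncomputable def hfun (g : SchwartzMap ℝ ℂ) (x : ℝ) : ℂ :=
  (Real.cos (2 * Real.pi * x) : ℂ) * g x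

noncomputable def hfun1 (g : SchwartzMap ℝ ℂ) (x : ℝ) : ℂ :=
  ((-(2 * Real.pi * Real.sin (2 * Real.pi * x)) : ℝ) : ℂ) * g x
    + ((Real.cos (2 * Real.pi * x) : ℝ) : ℂ) * Dg g x

noncomputable def hfun2 (g : SchwartzMap ℝ ℂ) (x : ℝ) : ℂ :=
  ((-((2 * Real.pi) ^ 2 * Real.cos (2 * Real.pi * x)) : ℝ) : ℂ) * g x
    + ((-(2 * (2 * Real.pi) * Real.sin (2 * Real.pi * x)) : ℝ) : ℂ) * Dg g x
    + ((Real.cos (2 * Real.pi * x) : ℝ) : ℂ) * Dg (Dg g) x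

lemma hasDerivAt_cos2pi (x : ℝ) :
    HasDerivAt (fun y : ℝ => ((Real.cos (2 * Real.pi * y) : ℝ) : ℂ))
      ((-(2 * Real.pi * Real.sin (2 * Real.pi * x)) : ℝ) : ℂ) x := by
  have h1 : HasDerivAt (fun y : ℝ => 2 * Real.pi * y) (2 * Real.pi) x := by
    simpa using (hasDerivAt_id x).const_mul (2 * Real.pi)
  have h2 : HasDerivAt (fun y : ℝ => Real.cos (2 * Real.pi * y))
      (-Real.sin (2 * Real.pi * x) * (2 * Real.pi)) x :=
    (Real.hasDerivAt_cos (2 * Real.pi * x)).comp x h1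
  have h3 := h2.ofReal_comp
  convert h3 using 1
  push_cast; ring

lemma hasDerivAt_sin2pi (x : ℝ) :
    HasDerivAt (fun y : ℝ => ((-(2 * Real.pi * Real.sin (2 * Real.pi * y)) : ℝ) : ℂ))
      ((-((2 * Real.pi) ^ 2 * Real.cos (2 * Real.pi * x)) : ℝ) : ℂ) x := by
  have h1 : HasDerivAt (fun y : ℝ => 2 * Real.pi * y) (2 * Real.pi) x := by
    simpa using (hasDerivAt_id x).const_mul (2 * Real.pi)
  have h2 : HasDerivAt (fun y : ℝ => Real.sin (2 * Real.pi * y))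
      (Real.cos (2 * Real.pi * x) * (2 * Real.pi)) x :=
    (Real.hasDerivAt_sin (2 * Real.pi * x)).comp x h1
  have h3 := ((h2.const_mul (2 * Real.pi)).neg).ofReal_comp
  convert h3 using 1
  · funext y; simp only [Pi.neg_apply]
  · push_cast; ring

lemma hasDerivAt_g (g : SchwartzMap ℝ ℂ) (x : ℝ) : HasDerivAt (⇑g) (Dg g x) x := by
  have := (g.differentiable x).hasDerivAt
  simpa [Dg, SchwartzMap.derivCLM_apply] using this

lemma hfun_hasDerivAt (g : SchwartzMap ℝ ℂ) (x : ℝ) :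
    HasDerivAt (hfun g) (hfun1 g x) x := by
  have h := (hasDerivAt_cos2pi x).mul (hasDerivAt_g g x)
  exact h

lemma hfun1_hasDerivAt (g : SchwartzMap ℝ ℂ) (x : ℝ) :
    HasDerivAt (hfun1 g) (hfun2 g x) x := by
  have h1 := (hasDerivAt_sin2pi x).mul (hasDerivAt_g g x)
  have h2 := (hasDerivAt_cos2pi x).mul (hasDerivAt_g (Dg g) x)
  have h := h1.add h2
  refine h.congr_deriv ?_
  unfold hfun2
  push_cast
  ring

lemma schwartz_decay2 (f : SchwartzMap ℝ ℂ) :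
    ∃ C : ℝ, 0 ≤ C ∧ ∀ x : ℝ, ‖f x‖ * (1 + x ^ 2) ≤ C := by
  obtain ⟨C0, hC0pos, hC0⟩ := f.decay 0 0
  obtain ⟨C2, hC2pos, hC2⟩ := f.decay 2 0
  refine ⟨C0 + C2, by linarith, fun x => ?_⟩
  have h0 := hC0 x
  have h2 := hC2 x
  rw [norm_iteratedFDeriv_zero] at h0 h2
  simp only [pow_zero, one_mul] at h0
  have hx : ‖x‖ ^ 2 = x ^ 2 := by rw [Real.norm_eq_abs, sq_abs]
  rw [hx] at h2
  nlinarith [norm_nonneg (f x)]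

lemma hfun_bounds (g : SchwartzMap ℝ ℂ) :
    ∃ A : ℝ, 0 ≤ A ∧ (∀ x : ℝ, ‖hfun g x‖ ≤ A / (1 + x ^ 2)) ∧
      (∀ x : ℝ, ‖hfun2 g x‖ ≤ A / (1 + x ^ 2)) := by
  obtain ⟨C0, hC00, hC0⟩ := schwartz_decay2 g
  obtain ⟨C1, hC10, hC1⟩ := schwartz_decay2 (Dg g)
  obtain ⟨C2, hC20, hC2⟩ := schwartz_decay2 (Dg (Dg g))
  have hπ : (0:ℝ) < Real.pi := Real.pi_pos
  refine ⟨(2 * Real.pi) ^ 2 * C0 + 2 * (2 * Real.pi) * C1 + C2 + C0, by positivity, ?_, ?_⟩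
  · intro x
    have h1x : (0:ℝ) < 1 + x ^ 2 := by positivity
    rw [le_div_iff₀ h1x]
    have hb : ‖hfun g x‖ ≤ ‖g x‖ := by
      unfold hfun
      rw [norm_mul, Complex.norm_real, Real.norm_eq_abs]
      calc |Real.cos (2 * Real.pi * x)| * ‖g x‖ ≤ 1 * ‖g x‖ :=
            mul_le_mul_of_nonneg_right (Real.abs_cos_le_one _) (norm_nonneg _)
        _ = ‖g x‖ := one_mul _
    have e1 := mul_le_mul_of_nonneg_right hb h1x.le
    have e2 := hC0 x
    have p1 : (0:ℝ) ≤ (2 * Real.pi) ^ 2 * C0 := by positivity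
    have p2 : (0:ℝ) ≤ 2 * (2 * Real.pi) * C1 := by positivity
    linarith
  · intro x
    have h1x : (0:ℝ) < 1 + x ^ 2 := by positivity
    rw [le_div_iff₀ h1x]
    have b1 : ‖((-((2 * Real.pi) ^ 2 * Real.cos (2 * Real.pi * x)) : ℝ) : ℂ) * g x‖
        ≤ (2 * Real.pi) ^ 2 * ‖g x‖ := by
      rw [norm_mul, Complex.norm_real, Real.norm_eq_abs]
      refine mul_le_mul_of_nonneg_right ?_ (norm_nonneg _)
      rw [abs_neg, abs_mul, abs_of_nonneg (by positivity : (0:ℝ) ≤ (2 * Real.pi) ^ 2)]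
      calc (2 * Real.pi) ^ 2 * |Real.cos (2 * Real.pi * x)| ≤ (2 * Real.pi) ^ 2 * 1 :=
            mul_le_mul_of_nonneg_left (Real.abs_cos_le_one _) (by positivity)
        _ = (2 * Real.pi) ^ 2 := mul_one _
    have b2 : ‖((-(2 * (2 * Real.pi) * Real.sin (2 * Real.pi * x)) : ℝ) : ℂ) * Dg g x‖
        ≤ 2 * (2 * Real.pi) * ‖Dg g x‖ := by
      rw [norm_mul, Complex.norm_real, Real.norm_eq_abs]
      refine mul_le_mul_of_nonneg_right ?_ (norm_nonneg _)
      rw [abs_neg, abs_mul, abs_of_nonneg (by positivity : (0:ℝ) ≤ 2 * (2 * Real.pi))]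
      calc 2 * (2 * Real.pi) * |Real.sin (2 * Real.pi * x)| ≤ 2 * (2 * Real.pi) * 1 :=
            mul_le_mul_of_nonneg_left (Real.abs_sin_le_one _) (by positivity)
        _ = 2 * (2 * Real.pi) := mul_one _
    have b3 : ‖((Real.cos (2 * Real.pi * x) : ℝ) : ℂ) * Dg (Dg g) x‖ ≤ ‖Dg (Dg g) x‖ := by
      rw [norm_mul, Complex.norm_real, Real.norm_eq_abs]
      calc |Real.cos (2 * Real.pi * x)| * ‖Dg (Dg g) x‖ ≤ 1 * ‖Dg (Dg g) x‖ :=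
            mul_le_mul_of_nonneg_right (Real.abs_cos_le_one _) (norm_nonneg _)
        _ = ‖Dg (Dg g) x‖ := one_mul _
    have htri : ‖hfun2 g x‖ ≤ (2 * Real.pi) ^ 2 * ‖g x‖ + 2 * (2 * Real.pi) * ‖Dg g x‖
        + ‖Dg (Dg g) x‖ := by
      unfold hfun2
      refine (norm_add₃_le).trans ?_
      exact add_le_add (add_le_add b1 b2) b3
    have e0 := mul_le_mul_of_nonneg_right htri h1x.le
    have e4 := mul_le_mul_of_nonneg_left (hC0 x) (by positivity : (0:ℝ) ≤ (2 * Real.pi) ^ 2)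
    have e5 := mul_le_mul_of_nonneg_left (hC1 x) (by positivity : (0:ℝ) ≤ 2 * (2 * Real.pi))
    have e6 := hC2 x
    nlinarith [norm_nonneg (g x), norm_nonneg (Dg g x), norm_nonneg (Dg (Dg g) x),
      mul_pos (by positivity : (0:ℝ) < 1) h1x]
/-! ## The key estimate: alternating sums of samples of `h` -/

set_option maxHeartbeats 1000000 in
lemma key (h h1 h2 : ℝ → ℂ) (A : ℝ)
    (hd1 : ∀ x, HasDerivAt h (h1 x) x) (hd2 : ∀ x, HasDerivAt h1 (h2 x) x)
    (hb0 : ∀ x, ‖h x‖ ≤ A / (1 + x ^ 2)) (hb2 : ∀ x, ‖h2 x‖ ≤ A / (1 + x ^ 2))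
    (N : ℕ) (hN : 1 ≤ N) :
    Summable (fun k : ℤ => ‖h ((k : ℝ) / N)‖) ∧
    Summable (fun k : ℤ => (-1 : ℂ) ^ k * h ((k : ℝ) / N)) ∧
    (∑' k : ℤ, ‖h ((k : ℝ) / N)‖ ≤ 8 * A * N) ∧
    ‖∑' k : ℤ, (-1 : ℂ) ^ k * h ((k : ℝ) / N)‖ ≤ 4 * A / N := by
  have hN1 : (1 : ℝ) ≤ N := by exact_mod_cast hN
  have hNpos : (0 : ℝ) < N := by linarith
  have hA : (0:ℝ) ≤ A := (norm_nonneg (h 0)).trans (by simpa using hb0 0)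
  obtain ⟨qs, qb⟩ := qsum N hN
  set q : ℤ → ℝ := fun k => ((N : ℝ) ^ 2 + (k : ℝ) ^ 2)⁻¹ with hqdef
  -- pointwise bound for the samples
  have hhb : ∀ k : ℤ, ‖h ((k : ℝ) / N)‖ ≤ A * (N : ℝ) ^ 2 * q k := by
    intro k
    refine (hb0 _).trans (le_of_eq ?_)
    have hden : 1 + ((k : ℝ) / N) ^ 2 = ((N : ℝ) ^ 2 + (k : ℝ) ^ 2) / (N : ℝ) ^ 2 := by
      field_simp
    rw [hden, div_div_eq_mul_div, div_eq_mul_inv]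
  have s1 : Summable (fun k : ℤ => ‖h ((k : ℝ) / N)‖) :=
    Summable.of_nonneg_of_le (fun _ => norm_nonneg _) hhb (qs.mul_left (A * (N : ℝ) ^ 2))
  have sb1 : ∑' k : ℤ, ‖h ((k : ℝ) / N)‖ ≤ 8 * A * N := by
    calc ∑' k : ℤ, ‖h ((k : ℝ) / N)‖ ≤ ∑' k : ℤ, A * (N : ℝ) ^ 2 * q k :=
          Summable.tsum_le_tsum hhb s1 (qs.mul_left (A * (N : ℝ) ^ 2))
      _ = A * (N : ℝ) ^ 2 * ∑' k : ℤ, q k := tsum_mul_left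
      _ ≤ A * (N : ℝ) ^ 2 * (8 / N) :=
          mul_le_mul_of_nonneg_left qb (by positivity)
      _ = 8 * A * N := by field_simp
  set F : ℤ → ℂ := fun k => (-1 : ℂ) ^ k * h ((k : ℝ) / N) with hFdef
  have hnF : ∀ k : ℤ, ‖F k‖ = ‖h ((k : ℝ) / N)‖ := by
    intro k
    simp [hFdef, norm_zpow]
  have sF : Summable F := (s1.congr fun k => (hnF k).symm).of_norm
  have sF1 : Summable (fun k : ℤ => F (k + 1)) := (Equiv.addRight (1 : ℤ)).summable_iff.mpr sF
  have sF2 : Summable (fun k : ℤ => F (k + 2)) := (Equiv.addRight (2 : ℤ)).summable_iff.mpr sF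
  have t1 : ∑' k : ℤ, F (k + 1) = ∑' k : ℤ, F k := (Equiv.addRight (1 : ℤ)).tsum_eq F
  have t2 : ∑' k : ℤ, F (k + 2) = ∑' k : ℤ, F k := (Equiv.addRight (2 : ℤ)).tsum_eq F
  have sq2 : Summable (fun k : ℤ => q (k + 2)) := (Equiv.addRight (2 : ℤ)).summable_iff.mpr qs
  have tq2 : ∑' k : ℤ, q (k + 2) = ∑' k : ℤ, q k := (Equiv.addRight (2 : ℤ)).tsum_eq q
  have hq2 : ∀ k : ℤ, q (k + 2) = ((N : ℝ) ^ 2 + ((k : ℝ) + 2) ^ 2)⁻¹ := by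
    intro k; simp only [hqdef]; push_cast; ring_nf
  -- the second-difference bound
  have hGb : ∀ k : ℤ, ‖F k + 2 * F (k + 1) + F (k + 2)‖ ≤ A * (q k + q (k + 2)) := by
    intro k
    have hne : (-1 : ℂ) ≠ 0 := by norm_num
    have hGeq : F k + 2 * F (k + 1) + F (k + 2)
        = (-1 : ℂ) ^ k * (h ((k : ℝ) / N) - 2 * h (((k : ℝ) + 1) / N)
            + h (((k : ℝ) + 2) / N)) := by
      simp only [hFdef]
      rw [zpow_add₀ hne k 1, zpow_add₀ hne k 2]
      have c1 : (((k + 1 : ℤ)) : ℝ) = (k : ℝ) + 1 := by push_cast; ring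
      have c2 : (((k + 2 : ℤ)) : ℝ) = (k : ℝ) + 2 := by push_cast; ring
      rw [c1, c2]
      have z1 : (-1 : ℂ) ^ (1 : ℤ) = -1 := by norm_num
      have z2 : (-1 : ℂ) ^ (2 : ℤ) = 1 := by norm_num
      rw [z1, z2]
      ring
    rw [hGeq, norm_mul]
    have hone : ‖(-1 : ℂ) ^ k‖ = 1 := by simp [norm_zpow]
    rw [hone, one_mul]
    have e1 : (k : ℝ) / N + 1 / N = ((k : ℝ) + 1) / N := by ring
    have e2 : (k : ℝ) / N + 2 * (1 / N) = ((k : ℝ) + 2) / N := by ring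
    have hM : ∀ t ∈ Set.Icc ((k : ℝ) / N) ((k : ℝ) / N + 2 * (1 / N)),
        ‖h2 t‖ ≤ A * ((N : ℝ) ^ 2 * q k + (N : ℝ) ^ 2 * q (k + 2)) := by
      intro t ht
      rw [e2] at ht
      refine (hb2 t).trans ?_
      have hf := frac_bound N hN k t ht
      rw [← hq2 k] at hf
      calc A / (1 + t ^ 2) = A * (1 + t ^ 2)⁻¹ := by rw [div_eq_mul_inv]
        _ ≤ A * ((N : ℝ) ^ 2 * q k + (N : ℝ) ^ 2 * q (k + 2)) := by
            refine mul_le_mul_of_nonneg_left ?_ hA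
            simpa [hqdef, hq2 k] using hf
    have hsd := second_diff h h1 h2 hd1 hd2 (by positivity : (0:ℝ) ≤ 1 / (N : ℝ)) hM
    rw [e1, e2] at hsd
    refine hsd.trans (le_of_eq ?_)
    have hN0 : (N : ℝ) ≠ 0 := ne_of_gt hNpos
    field_simp
  have sbound : Summable (fun k : ℤ => A * (q k + q (k + 2))) := (qs.add sq2).mul_left A
  have sGn : Summable (fun k : ℤ => ‖F k + 2 * F (k + 1) + F (k + 2)‖) :=
    Summable.of_nonneg_of_le (fun _ => norm_nonneg _) hGb sbound
  have sG : Summable (fun k : ℤ => F k + 2 * F (k + 1) + F (k + 2)) :=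
    (sF.add (sF1.mul_left 2)).add sF2
  have hT4 : ∑' k : ℤ, (F k + 2 * F (k + 1) + F (k + 2)) = 4 * ∑' k : ℤ, F k := by
    rw [Summable.tsum_add (sF.add (sF1.mul_left 2)) sF2, Summable.tsum_add sF (sF1.mul_left 2),
      tsum_mul_left, t1, t2]
    ring
  have hfinal : ‖∑' k : ℤ, F k‖ ≤ 4 * A / N := by
    have h4 : (4 : ℝ) * ‖∑' k : ℤ, F k‖ = ‖∑' k : ℤ, (F k + 2 * F (k + 1) + F (k + 2))‖ := by
      rw [hT4, norm_mul]
      norm_num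
    have hb : ‖∑' k : ℤ, (F k + 2 * F (k + 1) + F (k + 2))‖ ≤ 16 * A / N := by
      calc ‖∑' k : ℤ, (F k + 2 * F (k + 1) + F (k + 2))‖
          ≤ ∑' k : ℤ, ‖F k + 2 * F (k + 1) + F (k + 2)‖ := norm_tsum_le_tsum_norm sGn
        _ ≤ ∑' k : ℤ, A * (q k + q (k + 2)) := Summable.tsum_le_tsum hGb sGn sbound
        _ = A * (∑' k : ℤ, q k + ∑' k : ℤ, q (k + 2)) := by
            rw [tsum_mul_left, Summable.tsum_add qs sq2]
        _ = A * (∑' k : ℤ, q k + ∑' k : ℤ, q k) := by rw [tq2]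
        _ ≤ A * (8 / N + 8 / N) := by
            refine mul_le_mul_of_nonneg_left ?_ hA
            linarith
        _ = 16 * A / N := by ring
    have hr : (4:ℝ) * (4 * A / N) = 16 * A / N := by ring
    linarith
  exact ⟨s1, sF, sb1, hfinal⟩

lemma innerTerm_eq (g : SchwartzMap ℝ ℂ) (m : ℕ) (k : ℤ) :
    innerTerm g m k = (-1 : ℂ) ^ k * hfun g ((k : ℝ) / (2 * 4 ^ m)) := by
  have h4 : ((4:ℝ) ^ m) ≠ 0 := by positivity
  have harg : 2 * Real.pi * ((4:ℝ) ^ m - 1) * ((k : ℝ) / (2 * 4 ^ m))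
      = (k : ℝ) * Real.pi - 2 * Real.pi * ((k : ℝ) / (2 * 4 ^ m)) := by
    field_simp
  unfold innerTerm hfun
  rw [harg, Real.cos_int_mul_pi_sub]
  push_cast
  ring

lemma norm_ofReal_zpow (x : ℝ) (hx : 0 < x) (n : ℕ) :
    ‖((x ^ (-((n : ℤ) + 1)) : ℝ) : ℂ)‖ = (x ^ (n + 1))⁻¹ := by
  rw [Complex.norm_real, Real.norm_eq_abs, abs_of_pos (by positivity),
    show (-((n : ℤ) + 1)) = -(((n + 1 : ℕ) : ℤ)) by push_cast; ring, zpow_neg, zpow_natCast]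

end RegAux

open RegAux Filter in
/-- The regularisation statement: for `ε > 0` the double series converges absolutely,
at `ε = 0` the iterated series converges (inner sums first), and `S(ε) → S(0)` as
`ε → 0⁺`. -/
theorem regularisation (g : SchwartzMap ℝ ℂ) :
    (∀ ε : ℝ, 0 < ε → Summable (fun p : ℕ × ℤ =>
      ‖(((4 + ε) ^ (-((p.1 : ℤ) + 1)) : ℝ) : ℂ) * innerTerm g (p.1 + 1) p.2‖)) ∧
    (∀ n : ℕ, Summable (fun k : ℤ => innerTerm g (n + 1) k)) ∧
    Summable (fun n : ℕ =>
      (((4 : ℝ) ^ (-((n : ℤ) + 1)) : ℝ) : ℂ) * ∑' k : ℤ, innerTerm g (n + 1) k) ∧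
    Filter.Tendsto (fun ε : ℝ => S g ε) (nhdsWithin 0 (Set.Ioi 0)) (nhds (S g 0)) := by
  obtain ⟨A, hA, hb0, hb2⟩ := hfun_bounds g
  have hd1 := hfun_hasDerivAt g
  have hd2 := hfun1_hasDerivAt g
  have hKey : ∀ n : ℕ,
      Summable (fun k : ℤ => innerTerm g (n + 1) k) ∧
      Summable (fun k : ℤ => ‖innerTerm g (n + 1) k‖) ∧
      (∑' k : ℤ, ‖innerTerm g (n + 1) k‖ ≤ 8 * A * (2 * 4 ^ (n + 1))) ∧
      ‖∑' k : ℤ, innerTerm g (n + 1) k‖ ≤ 4 * A / (2 * 4 ^ (n + 1)) := by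
    intro n
    set N : ℕ := 2 * 4 ^ (n + 1) with hNdef
    have hNpos : 0 < N := by positivity
    have hN : 1 ≤ N := hNpos
    have hNcast : ((N : ℕ) : ℝ) = 2 * 4 ^ (n + 1) := by rw [hNdef]; push_cast; ring
    obtain ⟨k1, k2, k3, k4⟩ := key (hfun g) (hfun1 g) (hfun2 g) A hd1 hd2 hb0 hb2 N hN
    have hiter : ∀ k : ℤ, innerTerm g (n + 1) k = (-1 : ℂ) ^ k * hfun g ((k : ℝ) / (N : ℝ)) := by
      intro k
      rw [innerTerm_eq g (n + 1) k, hNcast]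
    have hitern : ∀ k : ℤ, ‖innerTerm g (n + 1) k‖ = ‖hfun g ((k : ℝ) / (N : ℝ))‖ := by
      intro k
      rw [hiter k, norm_mul]
      simp [norm_zpow]
    refine ⟨k2.congr fun k => (hiter k).symm, k1.congr fun k => (hitern k).symm, ?_, ?_⟩
    · rw [show (fun k : ℤ => ‖innerTerm g (n + 1) k‖)
          = fun k : ℤ => ‖hfun g ((k : ℝ) / (N : ℝ))‖ from funext hitern, ← hNcast]
      exact k3
    · rw [tsum_congr hiter, ← hNcast]
      exact k4
  -- geometric facts
  have geom16 : Summable (fun n : ℕ => 2 * A * (1 / 16 : ℝ) ^ n) :=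
    (summable_geometric_of_lt_one (by norm_num) (by norm_num)).mul_left (2 * A)
  have hmain : ∀ n : ℕ,
      ((4 : ℝ) ^ (n + 1))⁻¹ * ‖∑' k : ℤ, innerTerm g (n + 1) k‖ ≤ 2 * A * (1 / 16 : ℝ) ^ n := by
    intro n
    have h4pos : (0 : ℝ) < (4 : ℝ) ^ (n + 1) := by positivity
    have hstep : ((4 : ℝ) ^ (n + 1))⁻¹ * ‖∑' k : ℤ, innerTerm g (n + 1) k‖
        ≤ ((4 : ℝ) ^ (n + 1))⁻¹ * (4 * A / (2 * 4 ^ (n + 1))) :=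
      mul_le_mul_of_nonneg_left ((hKey n).2.2.2) (by positivity)
    have heq : ((4 : ℝ) ^ (n + 1))⁻¹ * (4 * A / (2 * 4 ^ (n + 1)))
        = 2 * A * (1 / 16 : ℝ) ^ (n + 1) := by
      have e16 : ((16 : ℝ)) ^ (n + 1) = 4 ^ (n + 1) * 4 ^ (n + 1) := by
        rw [← mul_pow]; norm_num
      rw [div_pow, one_pow, e16]
      field_simp
      ring
    have hmono : (2 : ℝ) * A * (1 / 16 : ℝ) ^ (n + 1) ≤ 2 * A * (1 / 16 : ℝ) ^ n := by
      refine mul_le_mul_of_nonneg_left ?_ (by positivity)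
      exact pow_le_pow_of_le_one (by norm_num) (by norm_num) (Nat.le_succ n)
    calc ((4 : ℝ) ^ (n + 1))⁻¹ * ‖∑' k : ℤ, innerTerm g (n + 1) k‖
        ≤ ((4 : ℝ) ^ (n + 1))⁻¹ * (4 * A / (2 * 4 ^ (n + 1))) := hstep
      _ = 2 * A * (1 / 16 : ℝ) ^ (n + 1) := heq
      _ ≤ 2 * A * (1 / 16 : ℝ) ^ n := hmono
  refine ⟨?_, fun n => (hKey n).1, ?_, ?_⟩
  -- (1) absolute convergence of the double series for positive ε
  · intro ε hε
    have h4ε : (0 : ℝ) < 4 + ε := by linarith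
    refine (summable_prod_of_nonneg (fun p => norm_nonneg _)).mpr ⟨fun n => ?_, ?_⟩
    · rw [show (fun k : ℤ => ‖(((4 + ε) ^ (-((n : ℤ) + 1)) : ℝ) : ℂ) * innerTerm g (n + 1) k‖)
          = fun k : ℤ => ‖(((4 + ε) ^ (-((n : ℤ) + 1)) : ℝ) : ℂ)‖ * ‖innerTerm g (n + 1) k‖
          from funext fun k => norm_mul _ _]
      exact ((hKey n).2.1).mul_left _
    · have hr1 : (0 : ℝ) ≤ 4 / (4 + ε) := by positivity
      have hr2 : (4 : ℝ) / (4 + ε) < 1 := by rw [div_lt_one h4ε]; linarith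
      refine Summable.of_nonneg_of_le (fun n => tsum_nonneg fun k => norm_nonneg _)
        (fun n => ?_)
        (((summable_geometric_of_lt_one hr1 hr2).mul_right (4 / (4 + ε))).mul_left (16 * A))
      have e1 : (fun k : ℤ => ‖(((4 + ε) ^ (-((n : ℤ) + 1)) : ℝ) : ℂ) * innerTerm g (n + 1) k‖)
          = fun k : ℤ => ‖(((4 + ε) ^ (-((n : ℤ) + 1)) : ℝ) : ℂ)‖ * ‖innerTerm g (n + 1) k‖ :=
        funext fun k => norm_mul _ _
      rw [e1, tsum_mul_left, norm_ofReal_zpow (4 + ε) h4ε n]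
      have h2 : ((4 + ε) ^ (n + 1) : ℝ)⁻¹ * ∑' k : ℤ, ‖innerTerm g (n + 1) k‖
          ≤ ((4 + ε) ^ (n + 1) : ℝ)⁻¹ * (8 * A * (2 * 4 ^ (n + 1))) :=
        mul_le_mul_of_nonneg_left ((hKey n).2.2.1) (by positivity)
      have h3 : ((4 + ε) ^ (n + 1) : ℝ)⁻¹ * (8 * A * (2 * 4 ^ (n + 1)))
          = 16 * A * ((4 / (4 + ε)) ^ n * (4 / (4 + ε))) := by
        rw [show (4 / (4 + ε)) ^ n * (4 / (4 + ε)) = (4 / (4 + ε)) ^ (n + 1) from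
          (pow_succ _ n).symm, div_pow]
        field_simp
        ring
      linarith
  -- (3) summability of the ε = 0 series
  · refine Summable.of_norm_bounded geom16 fun n => ?_
    rw [norm_mul, norm_ofReal_zpow 4 (by norm_num) n]
    exact hmain n
  -- (4) the limit
  · have hS0 : S g 0 = ∑' n : ℕ,
        (((4 : ℝ) ^ (-((n : ℤ) + 1)) : ℝ) : ℂ) * ∑' k : ℤ, innerTerm g (n + 1) k := by
      unfold S
      refine tsum_congr fun n => ?_
      norm_num
    rw [hS0]
    unfold S
    refine tendsto_tsum_of_dominated_convergence geom16 (fun n => ?_) ?_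
    · -- pointwise convergence of the coefficients
      have hc : ContinuousAt (fun x : ℝ => x ^ (-((n : ℤ) + 1))) ((4 : ℝ) + 0) :=
        continuousAt_zpow₀ _ _ (Or.inl (by norm_num))
      have hadd : ContinuousAt (fun ε : ℝ => (4 : ℝ) + ε) 0 :=
        (continuous_const.add continuous_id).continuousAt
      have hcc : ContinuousAt (fun ε : ℝ => ((4 : ℝ) + ε) ^ (-((n : ℤ) + 1))) 0 := hc.comp hadd
      have hccc : ContinuousAt
          (fun ε : ℝ => ((((4 : ℝ) + ε) ^ (-((n : ℤ) + 1)) : ℝ) : ℂ)) 0 :=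
        Complex.continuous_ofReal.continuousAt.comp hcc
      have ht : Filter.Tendsto
          (fun ε : ℝ => ((((4 : ℝ) + ε) ^ (-((n : ℤ) + 1)) : ℝ) : ℂ)
            * ∑' k : ℤ, innerTerm g (n + 1) k)
          (nhds 0)
          (nhds (((((4 : ℝ) + 0) ^ (-((n : ℤ) + 1)) : ℝ) : ℂ)
            * ∑' k : ℤ, innerTerm g (n + 1) k)) :=
        (hccc.mul continuousAt_const).tendsto
      have h40 : ((4 : ℝ) + 0) = 4 := by norm_num
      rw [h40] at ht
      exact ht.mono_left nhdsWithin_le_nhds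
    · -- the uniform bound
      filter_upwards [self_mem_nhdsWithin] with ε hε n
      have hεpos : (0 : ℝ) < ε := hε
      have h4ε : (0 : ℝ) < 4 + ε := by linarith
      rw [norm_mul, norm_ofReal_zpow (4 + ε) h4ε n]
      have hle : ((4 + ε) ^ (n + 1) : ℝ)⁻¹ ≤ ((4 : ℝ) ^ (n + 1))⁻¹ := by
        apply inv_anti₀ (by positivity)
        exact pow_le_pow_left₀ (by norm_num) (by linarith) (n + 1)
      calc ((4 + ε) ^ (n + 1) : ℝ)⁻¹ * ‖∑' k : ℤ, innerTerm g (n + 1) k‖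
          ≤ ((4 : ℝ) ^ (n + 1))⁻¹ * ‖∑' k : ℤ, innerTerm g (n + 1) k‖ :=
            mul_le_mul_of_nonneg_right hle (norm_nonneg _)
        _ ≤ 2 * A * (1 / 16 : ℝ) ^ n := hmain n
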